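/- Let G be a profinite group and g ∈ G an element having a countable Engel sink. Then there exist positive integers i, k, an open normal subgroup N of G, and b ∈ G such that [[nb, ᵢg], g^k] = 1 for all n ∈ N. -/

import Mathlib

/-- The left-normed iterated commutator `[x, ₙg]`: `engel g x 0 = x` and
`engel g x (n+1) = [engel g x n, g] = (engel g x n)⁻¹ * g⁻¹ * (engel g x n) * g`. -/
def engel {G : Type*} [Group G] (g x : G) : ℕ → G
  | 0 => x
  | n + 1 => (engel g x n)⁻¹ * g⁻¹ * engel g x n * g

/-- `E` is an Engel sink of `g`: for every `x` all sufficiently long commutators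
`[x, ₙg]` lie in `E`. -/
def IsEngelSink {G : Type*} [Group G] (g : G) (E : Set G) : Prop :=
  ∀ x : G, ∃ N : ℕ, ∀ n : ℕ, N ≤ n → engel g x n ∈ E

lemma engel_continuous {G : Type*} [Group G] [TopologicalSpace G] [IsTopologicalGroup G]
    (g : G) (j : ℕ) : Continuous fun x : G => engel g x j := by
  induction j with
  | zero => exact continuous_id
  | succ n ih =>
    show Continuous fun x : G => (engel g x n)⁻¹ * g⁻¹ * engel g x n * g
    fun_prop

lemma engel_map {G H : Type*} [Group G] [Group H] (φ : G →* H) (g x : G) (j : ℕ) :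
    engel (φ g) (φ x) j = φ (engel g x j) := by
  induction j with
  | zero => rfl
  | succ n ih => simp only [engel, ih, map_mul, map_inv]

lemma engel_conj {G : Type*} [Group G] (g h x : G) (hc : g * h = h * g) (j : ℕ) :
    engel g (h⁻¹ * x * h) j = h⁻¹ * engel g x j * h := by
  have hc' : h⁻¹ * g * h = g := by
    rw [mul_assoc, hc, ← mul_assoc, inv_mul_cancel, one_mul]
  have hmap := engel_map (MulAut.conj h⁻¹).toMonoidHom g x j
  simpa [MulAut.conj_apply, inv_inv, hc'] using hmap

/-- Let `G` be a profinite group and `g ∈ G` an element with a countable Engel sink.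
Then there are positive integers `i, k`, an open normal subgroup `N` and `b ∈ G` such
that `[[n*b, ᵢg], g^k] = 1` for all `n ∈ N`. -/
theorem profinite_countable_sink_commutator_power
    {G : Type*} [Group G] [TopologicalSpace G] [IsTopologicalGroup G]
    [CompactSpace G] [T2Space G] [TotallyDisconnectedSpace G]
    (g : G) (E : Set G) (hcount : E.Countable) (hE : IsEngelSink g E) :
    ∃ (i k : ℕ) (N : Subgroup G) (b : G), 1 ≤ i ∧ 1 ≤ k ∧ N.Normal ∧ IsOpen (N : Set G) ∧
      ∀ n ∈ N,
        (engel g (n * b) i)⁻¹ * (g ^ k)⁻¹ * engel g (n * b) i * g ^ k = 1 := by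
  classical
  -- E is nonempty
  obtain ⟨M, hM⟩ := hE 1
  have hEne : E.Nonempty := ⟨engel g 1 M, hM M le_rfl⟩
  obtain ⟨f, hf⟩ := Set.Countable.exists_eq_range hcount hEne
  -- Baire category: one of the closed sets {x | engel g x j = f n} has nonempty interior
  set C : ℕ × ℕ → Set G := fun p => {x | engel g x p.1 = f p.2} with hC
  have hclosed : ∀ p, IsClosed (C p) := fun p =>
    isClosed_eq (engel_continuous g p.1) continuous_const
  have hcover : ⋃ p, C p = Set.univ := by
    ext x
    simp only [Set.mem_iUnion, Set.mem_univ, iff_true]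
    obtain ⟨N, hN⟩ := hE x
    have : engel g x N ∈ E := hN N le_rfl
    rw [hf] at this
    obtain ⟨n, hn⟩ := this
    exact ⟨(N, n), hn.symm⟩
  obtain ⟨⟨j, m⟩, b, hb⟩ := nonempty_interior_of_iUnion_of_closed hclosed hcover
  set e := f m with he
  -- translate the open set to a neighborhood of 1
  have hWopen : IsOpen ((fun x : G => x * b⁻¹) '' interior (C (j, m))) :=
    (Homeomorph.mulRight b⁻¹).isOpenMap _ isOpen_interior
  have h1W : (1 : G) ∈ (fun x : G => x * b⁻¹) '' interior (C (j, m)) :=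
    ⟨b, hb, mul_inv_cancel b⟩
  obtain ⟨V, hVclopen, h1V, hVW⟩ := compact_exists_isClopen_in_isOpen hWopen h1W
  obtain ⟨H, hHV⟩ :=
    IsTopologicalGroup.exist_openNormalSubgroup_sub_clopen_nhds_of_one hVclopen h1V
  set N : Subgroup G := H.toSubgroup with hN
  have hNnormal : N.Normal := H.isNormal'
  have hNopen : IsOpen (N : Set G) := H.isOpen'
  -- engel g (x*b) j is constant e on the coset N*b
  have hconst : ∀ x ∈ N, engel g (x * b) j = e := by
    intro x hx
    have : x ∈ (fun x : G => x * b⁻¹) '' interior (C (j, m)) := hVW (hHV hx)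
    obtain ⟨u, hu, hub⟩ := this
    have hxu : x * b = u := by rw [← hub]; group
    have h2 : u ∈ C (j, m) := interior_subset hu
    rw [hxu]
    exact h2
  -- finite index, so some positive power of g lies in N
  have : Finite (G ⧸ N) := N.quotient_finite_of_isOpen hNopen
  have : N.FiniteIndex := N.finiteIndex_of_finite_quotient
  set k := N.index with hk
  have hk1 : 1 ≤ k := Nat.one_le_iff_ne_zero.mpr Subgroup.FiniteIndex.index_ne_zero
  have hgk : g ^ k ∈ N := Subgroup.pow_index_mem N g
  set h := g ^ k with hh
  have hgh : g * h = h * g := (Commute.self_pow g k).eq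
  -- e commutes with h = g^k
  have hcomm : h * e = e * h := by
    have hm' : h⁻¹ * 1 * (b * h * b⁻¹) ∈ N := by
      refine N.mul_mem (by simpa using N.inv_mem hgk) ?_
      exact hNnormal.conj_mem _ hgk b
    have hcoset : (h⁻¹ * 1 * (b * h * b⁻¹)) * b = h⁻¹ * (1 * b) * h := by group
    have h1 : engel g ((h⁻¹ * 1 * (b * h * b⁻¹)) * b) j = e := hconst _ hm'
    rw [hcoset, engel_conj g h (1 * b) hgh j, hconst 1 N.one_mem] at h1
    have h2 := congrArg (fun z => h * z) h1
    simp only [← mul_assoc, mul_inv_cancel, one_mul] at h2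
    exact h2.symm
  -- the constant value of engel at level j+1 commutes with h
  set e' := e⁻¹ * g⁻¹ * e * g with he'
  have hcomm' : Commute e' h := by
    have hce : Commute e h := hcomm.symm
    have hcg : Commute g h := hgh
    exact ((hce.inv_left.mul_left hcg.inv_left).mul_left hce).mul_left hcg
  refine ⟨j + 1, k, N, b, Nat.le_add_left 1 j, hk1, hNnormal, hNopen, ?_⟩
  intro x hx
  have hval : engel g (x * b) (j + 1) = e' := by
    show (engel g (x * b) j)⁻¹ * g⁻¹ * engel g (x * b) j * g = e'
    rw [hconst x hx]
  rw [hval, ← hh]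
  have : e' * h = h * e' := hcomm'.eq
  calc e'⁻¹ * h⁻¹ * e' * h = e'⁻¹ * h⁻¹ * (e' * h) := by group
    _ = e'⁻¹ * h⁻¹ * (h * e') := by rw [this]
    _ = 1 := by group
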